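/- (Theorem 3.2) For every finite simple graph G with vertex set V and edge set E, every positive integer q, and all real J and β with v := exp(βJ) − 1 ≠ 0, the Potts model partition function satisfies P₁(G;q,β) = q^{k(G)} · v^{|V| − k(G)} · t(G; (q+v)/v, v+1), where t is the Tutte polynomial given by its spanning-subgraph expansion t(G;x,y) = ∑_{A ⊆ E} (x−1)^{k(A) − k(G)} (y−1)^{|A| − |V| + k(A)}. -/

import Mathlib

open Finset SimpleGraph

/-- Number of connected components of the spanning subgraph `(V, A)`. -/
noncomputable def numComp {V : Type*} [Fintype V] (A : Finset (Sym2 V)) : ℕ :=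
  Nat.card (SimpleGraph.fromEdgeSet (A : Set (Sym2 V))).ConnectedComponent

/-- Hamiltonian `h₁(σ) = −J·|{e = {i,j} ∈ E : σ i = σ j}|`. -/
noncomputable def hamOne {V : Type*} [Fintype V] [DecidableEq V]
    (G : SimpleGraph V) [DecidableRel G.Adj] (J : ℝ) {q : ℕ} (σ : V → Fin q) : ℝ :=
  -J * ((G.edgeFinset.filter fun e => (e.map σ).IsDiag).card : ℝ)

/-- The Tutte polynomial via its spanning-subgraph expansion:
`t(G;x,y) = ∑_{A ⊆ E} (x−1)^{k(A) − k(G)} (y−1)^{|A| − |V| + k(A)}`. -/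
noncomputable def tutte {V : Type*} [Fintype V] [DecidableEq V]
    (G : SimpleGraph V) [DecidableRel G.Adj] (x y : ℝ) : ℝ :=
  ∑ A ∈ G.edgeFinset.powerset,
    (x - 1) ^ ((numComp A : ℤ) - (numComp G.edgeFinset : ℤ)) *
      (y - 1) ^ ((A.card : ℤ) - (Fintype.card V : ℤ) + (numComp A : ℤ))

section helpers
set_option linter.unusedSectionVars false
variable {V : Type*} [Fintype V] [DecidableEq V]


lemma sigma_const (q : ℕ) (A : Finset (Sym2 V)) (σ : V → Fin q)
    (h : ∀ e ∈ A, (Sym2.map σ e).IsDiag) :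
    ∀ {a b : V}, (fromEdgeSet (A : Set (Sym2 V))).Reachable a b → σ a = σ b := by
  intro a b ⟨p⟩
  induction p with
  | nil => rfl
  | cons hadj _ ih =>
    rw [fromEdgeSet_adj] at hadj
    have := h _ hadj.1
    rw [Sym2.map_pair_eq, Sym2.isDiag_iff_proj_eq] at this
    exact this.trans ih

noncomputable def constEquiv (q : ℕ) (A : Finset (Sym2 V)) :
    {σ : V → Fin q // ∀ e ∈ A, (Sym2.map σ e).IsDiag} ≃
      ((fromEdgeSet (A : Set (Sym2 V))).ConnectedComponent → Fin q) where
  toFun σ := ConnectedComponent.lift σ.1 fun a b p _ => sigma_const q A σ.1 σ.2 ⟨p⟩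
  invFun f := ⟨fun x => f ((fromEdgeSet (A : Set (Sym2 V))).connectedComponentMk x), by
    intro e he
    induction e with
    | _ a b =>
      rw [Sym2.map_pair_eq, Sym2.isDiag_iff_proj_eq]
      by_cases hab : a = b
      · rw [hab]
      · exact congrArg f (ConnectedComponent.sound (Adj.reachable (by
          rw [fromEdgeSet_adj]; exact ⟨he, hab⟩)))⟩
  left_inv σ := rfl
  right_inv f := by
    funext c
    induction c using ConnectedComponent.ind
    rfl

lemma count_const (q : ℕ) (A : Finset (Sym2 V)) :
    Nat.card {σ : V → Fin q // ∀ e ∈ A, (Sym2.map σ e).IsDiag} = q ^ numComp A := by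
  rw [Nat.card_congr (constEquiv q A), Nat.card_fun, Nat.card_eq_fintype_card,
    Fintype.card_fin, numComp]


lemma sum_prod_ind (q : ℕ) (A : Finset (Sym2 V)) :
    ∑ σ : V → Fin q, ∏ e ∈ A, (if (Sym2.map σ e).IsDiag then (1:ℝ) else 0)
      = (q : ℝ) ^ numComp A := by
  have key : ∀ σ : V → Fin q, (∏ e ∈ A, (if (Sym2.map σ e).IsDiag then (1:ℝ) else 0))
      = if (∀ e ∈ A, (Sym2.map σ e).IsDiag) then (1:ℝ) else 0 := fun σ => by
    rw [Finset.prod_boole]; congr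
  simp_rw [key]
  rw [← Finset.natCast_card_filter]
  have hcard : (Finset.univ.filter
      (fun σ : V → Fin q => ∀ e ∈ A, (Sym2.map σ e).IsDiag)).card
      = Nat.card {σ : V → Fin q // ∀ e ∈ A, (Sym2.map σ e).IsDiag} := by
    rw [Nat.card_eq_fintype_card, Fintype.card_subtype]
  rw [hcard, count_const q A]
  push_cast
  rfl

lemma zpow_key (q v : ℝ) (hq : q ≠ 0) (hv : v ≠ 0) (kG kA n a : ℤ) :
    q ^ kG * v ^ (n - kG) * ((q / v) ^ (kA - kG) * v ^ (a - n + kA)) = q ^ kA * v ^ a := by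
  rw [div_zpow, div_eq_mul_inv, ← zpow_neg]
  rw [show q ^ kG * v ^ (n - kG) * (q ^ (kA - kG) * v ^ (-(kA - kG)) * v ^ (a - n + kA))
      = (q ^ kG * q ^ (kA - kG)) * (v ^ (n - kG) * v ^ (-(kA - kG)) * v ^ (a - n + kA)) from by
    ring]
  rw [← zpow_add₀ hq, ← zpow_add₀ hv, ← zpow_add₀ hv]
  congr 1 <;> [skip ; congr 1] <;> ring

end helpers

/-- **Theorem 3.2.** With `v = exp(βJ) − 1 ≠ 0`,
`P₁(G;q,β) = q^{k(G)} · v^{|V| − k(G)} · t(G; (q+v)/v, v+1)`. -/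
theorem potts_eq_tutte {V : Type*} [Fintype V] [DecidableEq V]
    (G : SimpleGraph V) [DecidableRel G.Adj] (q : ℕ) (hq : 0 < q) (J β : ℝ)
    (v : ℝ) (hv : v = Real.exp (β * J) - 1) (hv0 : v ≠ 0) :
    (∑ σ : V → Fin q, Real.exp (-β * hamOne G J σ)) =
      (q : ℝ) ^ (numComp G.edgeFinset) *
        v ^ ((Fintype.card V : ℤ) - (numComp G.edgeFinset : ℤ)) *
        tutte G (((q : ℝ) + v) / v) (v + 1) := by
  have hexp : Real.exp (β * J) = v + 1 := by rw [hv]; ring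
  have hqR : (q : ℝ) ≠ 0 := Nat.cast_ne_zero.mpr hq.ne'
  set χ : (V → Fin q) → Sym2 V → ℝ :=
    fun σ e => if (Sym2.map σ e).IsDiag then (1:ℝ) else 0 with hχ
  have step1 : ∀ σ : V → Fin q, Real.exp (-β * hamOne G J σ)
      = ∏ e ∈ G.edgeFinset, (v * χ σ e + 1) := by
    intro σ
    rw [hamOne]
    set m := (G.edgeFinset.filter fun e => (Sym2.map σ e).IsDiag).card with hm
    rw [show -β * (-J * (m : ℝ)) = (m : ℝ) * (β * J) from by ring,
      Real.exp_nat_mul, hexp]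
    have : ∏ e ∈ G.edgeFinset, (v * χ σ e + 1) = (v + 1) ^ m := by
      rw [← Finset.prod_filter_mul_prod_filter_not G.edgeFinset
        (fun e => (Sym2.map σ e).IsDiag)]
      rw [Finset.prod_congr rfl (fun e he => show v * χ σ e + 1 = v + 1 from by
          rw [hχ]; simp only; rw [if_pos (Finset.mem_filter.mp he).2]; ring),
        Finset.prod_congr rfl (fun e he => show v * χ σ e + 1 = 1 from by
          rw [hχ]; simp only; rw [if_neg (Finset.mem_filter.mp he).2]; ring),
        Finset.prod_const, Finset.prod_const_one, mul_one]
    rw [this]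
  have step2 : ∀ σ : V → Fin q, ∏ e ∈ G.edgeFinset, (v * χ σ e + 1)
      = ∑ A ∈ G.edgeFinset.powerset, v ^ A.card * ∏ e ∈ A, χ σ e := by
    intro σ
    rw [Finset.prod_add]
    refine Finset.sum_congr rfl fun A hA => ?_
    rw [Finset.prod_const_one, mul_one, Finset.prod_mul_distrib, Finset.prod_const]
  calc (∑ σ : V → Fin q, Real.exp (-β * hamOne G J σ))
      = ∑ σ : V → Fin q, ∑ A ∈ G.edgeFinset.powerset, v ^ A.card * ∏ e ∈ A, χ σ e := by
        exact Finset.sum_congr rfl fun σ _ => (step1 σ).trans (step2 σ)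
    _ = ∑ A ∈ G.edgeFinset.powerset, ∑ σ : V → Fin q, v ^ A.card * ∏ e ∈ A, χ σ e :=
        Finset.sum_comm
    _ = ∑ A ∈ G.edgeFinset.powerset, v ^ A.card * (q : ℝ) ^ numComp A := by
        refine Finset.sum_congr rfl fun A hA => ?_
        rw [← Finset.mul_sum, sum_prod_ind q A]
    _ = (q : ℝ) ^ (numComp G.edgeFinset) *
        v ^ ((Fintype.card V : ℤ) - (numComp G.edgeFinset : ℤ)) *
        tutte G (((q : ℝ) + v) / v) (v + 1) := by
        rw [_root_.tutte, Finset.mul_sum]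
        refine Finset.sum_congr rfl fun A hA => ?_
        rw [show ((q : ℝ) + v) / v - 1 = (q : ℝ) / v from by field_simp; ring,
          show v + 1 - 1 = v from by ring,
          show ((q : ℝ)) ^ (numComp G.edgeFinset)
            = (q : ℝ) ^ ((numComp G.edgeFinset : ℤ)) from (zpow_natCast _ _).symm,
          zpow_key (q : ℝ) v hqR hv0 _ _ _ _,
          zpow_natCast, zpow_natCast]
        ring
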